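/- Let a < b be positive integers. Let w, A : ℝ → ℂ be real-analytic and 2π-periodic, with w not identically zero, and suppose every zero of w is of order exactly 2. Assume that at every zero t₀ of w: A(t₀) ≠ 0, and either A(t₀)·conj(w''(t₀)) is not a negative real number, or Im(A'(t₀)/A(t₀)) ≠ Im(w'''(t₀)/(3·w''(t₀))). Then there exists ε₀ > 0 such that for every ε with 0 < ε < ε₀ and every t ∈ ℝ: ε^a·w(t) + ε^b·A(t) ≠ 0. -/

import Mathlib

open Filter Topology Set

private lemma analyticAt_deriv' {f : ℝ → ℂ} {x : ℝ} (h : AnalyticAt ℝ f x) :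
    AnalyticAt ℝ (deriv f) x := by
  obtain ⟨s, hs, h⟩ := h.exists_mem_nhds_analyticOnNhd
  exact h.deriv x (mem_of_mem_nhds hs)

private lemma evderiv (t₀ : ℝ) (g : ℝ → ℂ) (hg : AnalyticAt ℝ g t₀) (n : ℕ) (hn : 1 ≤ n) :
    deriv (fun t => (t - t₀) ^ n • g t) =ᶠ[𝓝 t₀]
      fun t => (t - t₀) ^ (n - 1) • ((n : ℝ) • g t + (t - t₀) • deriv g t) := by
  obtain ⟨m, rfl⟩ : ∃ m, n = m + 1 := ⟨n - 1, (Nat.succ_pred_eq_of_pos hn).symm⟩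
  filter_upwards [hg.eventually_analyticAt] with t hgt
  have hd : HasDerivAt g (deriv g t) t := hgt.differentiableAt.hasDerivAt
  have hp : HasDerivAt (fun s : ℝ => (s - t₀) ^ (m + 1))
      (((m + 1 : ℕ) : ℝ) * (t - t₀) ^ (m + 1 - 1) * 1) t :=
    ((hasDerivAt_id t).sub_const t₀).pow (m + 1)
  rw [show (fun t => (t - t₀) ^ (m + 1) • g t) = ((fun s : ℝ => (s - t₀) ^ (m + 1)) • g) from rfl,
    (hp.smul hd).deriv]
  simp only [Nat.add_sub_cancel, Complex.real_smul]
  push_cast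
  ring

private lemma factor_derivs {t₀ : ℝ} {w W : ℝ → ℂ} (hW : AnalyticAt ℝ W t₀)
    (hfac : w =ᶠ[𝓝 t₀] fun t => (t - t₀) ^ 2 • W t) :
    iteratedDeriv 2 w t₀ = 2 * W t₀ ∧ iteratedDeriv 3 w t₀ = 6 * deriv W t₀ := by
  have hW' : AnalyticAt ℝ (deriv W) t₀ := analyticAt_deriv' hW
  set g₁ : ℝ → ℂ := fun t => (2 : ℝ) • W t + (t - t₀) • deriv W t with hg₁def
  have hg₁ : AnalyticAt ℝ g₁ t₀ :=
    ((analyticAt_const (v := (2 : ℝ)).smul hW)).add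
      (((analyticAt_id.sub (analyticAt_const (v := t₀)))).smul hW')
  have hg₁' : AnalyticAt ℝ (deriv g₁) t₀ := analyticAt_deriv' hg₁
  have e1 : deriv w =ᶠ[𝓝 t₀] fun t => (t - t₀) ^ 1 • g₁ t := by
    refine (hfac.deriv).trans ?_
    have := evderiv t₀ W hW 2 (by norm_num)
    refine this.trans (Eventually.of_forall fun t => ?_)
    norm_num [hg₁def]
  set g₂ : ℝ → ℂ := fun t => g₁ t + (t - t₀) • deriv g₁ t with hg₂def
  have e2 : deriv (deriv w) =ᶠ[𝓝 t₀] g₂ := by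
    refine (e1.deriv).trans ?_
    refine (evderiv t₀ g₁ hg₁ 1 le_rfl).trans (Eventually.of_forall fun t => ?_)
    norm_num [hg₂def]
  have hi2 : iteratedDeriv 2 w = deriv (deriv w) := by
    simp [iteratedDeriv_succ, iteratedDeriv_zero]
  have h2 : iteratedDeriv 2 w t₀ = 2 * W t₀ := by
    rw [hi2, e2.eq_of_nhds, hg₂def, hg₁def]
    simp [Complex.real_smul]
  refine ⟨h2, ?_⟩
  have hdg₁ : HasDerivAt g₁ (3 * deriv W t₀) t₀ := by
    have p1 : HasDerivAt (fun t : ℝ => (2 : ℝ) • W t) ((2 : ℝ) • deriv W t₀) t₀ :=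
      (hW.differentiableAt.hasDerivAt).const_smul (2 : ℝ)
    have p2 : HasDerivAt (fun t : ℝ => (t - t₀) • deriv W t)
        ((t₀ - t₀) • deriv (deriv W) t₀ + (1 : ℝ) • deriv W t₀) t₀ := by
      have : HasDerivAt (fun t : ℝ => (t - t₀) • deriv W t) _ t₀ :=
        ((hasDerivAt_id t₀).sub_const t₀).smul (hW'.differentiableAt.hasDerivAt)
      simpa using this
    have : HasDerivAt (fun t : ℝ => (2 : ℝ) • W t + (t - t₀) • deriv W t) _ t₀ := p1.add p2
    simp only [sub_self, zero_smul, zero_add, one_smul, Complex.real_smul] at this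
    convert this using 1
    · funext t; simp only [hg₁def, Complex.real_smul]
    push_cast; ring
  have hdg₂ : HasDerivAt g₂ (6 * deriv W t₀) t₀ := by
    have p2 : HasDerivAt (fun t : ℝ => (t - t₀) • deriv g₁ t)
        ((t₀ - t₀) • deriv (deriv g₁) t₀ + (1 : ℝ) • deriv g₁ t₀) t₀ := by
      have : HasDerivAt (fun t : ℝ => (t - t₀) • deriv g₁ t) _ t₀ :=
        ((hasDerivAt_id t₀).sub_const t₀).smul (hg₁'.differentiableAt.hasDerivAt)
      simpa using this
    rw [hdg₁.deriv] at p2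
    have : HasDerivAt (fun t : ℝ => g₁ t + (t - t₀) • deriv g₁ t) _ t₀ := hdg₁.add p2
    simp only [sub_self, zero_smul, zero_add, one_smul] at this
    convert this using 1
    ring
  have : iteratedDeriv 3 w t₀ = deriv g₂ t₀ := by
    have hi3 : iteratedDeriv 3 w = deriv (deriv (deriv w)) := by
      simp [iteratedDeriv_succ, iteratedDeriv_zero]
    rw [hi3]
    exact (e2.deriv).eq_of_nhds
  rw [this, hdg₂.deriv]

private lemma get_factor {w : ℝ → ℂ} (hw_an : ∀ t : ℝ, AnalyticAt ℝ w t) (hw0 : w ≠ 0)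
    {t₀ : ℝ} (h0 : w t₀ = 0) (h1 : deriv w t₀ = 0) (h2 : iteratedDeriv 2 w t₀ ≠ 0) :
    ∃ W : ℝ → ℂ, AnalyticAt ℝ W t₀ ∧ W t₀ ≠ 0 ∧
      w =ᶠ[𝓝 t₀] fun t => (t - t₀) ^ 2 • W t := by
  have not_ev : ¬ ∀ᶠ t in 𝓝 t₀, w t = 0 := by
    intro hev
    apply hw0
    funext x
    have : AnalyticOnNhd ℝ w univ := fun t _ => hw_an t
    exact this.eqOn_zero_of_preconnected_of_eventuallyEq_zero isPreconnected_univ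
      (mem_univ t₀) hev (mem_univ x)
  obtain ⟨n, g, hg, hgne, heq⟩ :=
    (hw_an t₀).exists_eventuallyEq_pow_smul_nonzero_iff.mpr not_ev
  replace heq : w =ᶠ[𝓝 t₀] fun z => (z - t₀) ^ n • g z := heq
  have hi2 : iteratedDeriv 2 w = deriv (deriv w) := by
    simp [iteratedDeriv_succ, iteratedDeriv_zero]
  match n with
  | 0 =>
    exfalso
    have := heq.eq_of_nhds
    simp only [sub_self, pow_zero, one_smul] at this
    exact hgne (this ▸ h0)
  | 1 =>
    exfalso
    have e1 := (heq.deriv).trans (evderiv t₀ g hg 1 le_rfl)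
    have := e1.eq_of_nhds
    rw [h1] at this
    norm_num [sub_self] at this
    exact hgne this.symm
  | 2 => exact ⟨g, hg, hgne, heq⟩
  | (m + 3) =>
    exfalso
    have hG₁ : AnalyticAt ℝ (fun t => ((m + 3 : ℕ) : ℝ) • g t + (t - t₀) • deriv g t) t₀ :=
      (analyticAt_const (v := ((m + 3 : ℕ) : ℝ)).smul hg).add
        ((analyticAt_id.sub (analyticAt_const (v := t₀))).smul (analyticAt_deriv' hg))
    have e2 := ((heq.deriv).trans (evderiv t₀ g hg (m + 3) (by omega))).deriv.trans
      (evderiv t₀ (fun t => ((m + 3 : ℕ) : ℝ) • g t + (t - t₀) • deriv g t) hG₁ (m + 2)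
        (by omega))
    have := e2.eq_of_nhds
    rw [← hi2] at this
    simp only [sub_self, Nat.add_sub_cancel] at this
    rw [zero_pow (by omega), zero_smul] at this
    exact h2 this

/-- Nonvanishing of the deformed critical values: let `a < b` be positive integers and let
`w, A : ℝ → ℂ` be real-analytic and `2π`-periodic, `w` not identically zero, all zeros of `w`
of order exactly `2`. If at every zero `t₀` of `w` we have `A t₀ ≠ 0` and either
`A t₀ * conj (w'' t₀)` is not a negative real number, or the argument-derivative of `A` at
`t₀` differs from the limiting argument-derivative `Im(w'''(t₀)/(3 w''(t₀)))` of `w`, then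
there is `ε₀ > 0` such that `ε^a w(t) + ε^b A(t) ≠ 0` for all `0 < ε < ε₀` and all `t`. -/
theorem deformation_nonvanishing
    (a b : ℕ) (ha : 0 < a) (hab : a < b)
    (w A : ℝ → ℂ)
    (hw_an : ∀ t : ℝ, AnalyticAt ℝ w t) (hA_an : ∀ t : ℝ, AnalyticAt ℝ A t)
    (hw_per : ∀ t : ℝ, w (t + 2 * Real.pi) = w t)
    (hA_per : ∀ t : ℝ, A (t + 2 * Real.pi) = A t)
    (hw0 : w ≠ 0)
    (horder : ∀ t₀ : ℝ, w t₀ = 0 → deriv w t₀ = 0 ∧ iteratedDeriv 2 w t₀ ≠ 0)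
    (hzero : ∀ t₀ : ℝ, w t₀ = 0 →
      A t₀ ≠ 0 ∧
      ((¬ ∃ x : ℝ, x < 0 ∧ A t₀ * (starRingEnd ℂ) (iteratedDeriv 2 w t₀) = (x : ℂ)) ∨
        (deriv A t₀ / A t₀).im ≠ (iteratedDeriv 3 w t₀ / (3 * iteratedDeriv 2 w t₀)).im)) :
    ∃ ε₀ > (0 : ℝ), ∀ ε : ℝ, 0 < ε → ε < ε₀ → ∀ t : ℝ,
      (ε : ℂ) ^ a * w t + (ε : ℂ) ^ b * A t ≠ 0 := by
  by_contra hcon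
  push_neg at hcon
  have key : ∀ n : ℕ, ∃ ε t, 0 < ε ∧ ε < 1 / ((n : ℝ) + 1) ∧ t ∈ Icc 0 (2 * Real.pi) ∧
      w t + ((ε ^ (b - a) : ℝ) : ℂ) * A t = 0 := by
    intro n
    obtain ⟨ε, hε0, hεlt, t, hteq⟩ := hcon (1 / ((n : ℝ) + 1)) (by positivity)
    have hεa : ((ε : ℂ)) ^ a ≠ 0 := pow_ne_zero _ (by exact_mod_cast hε0.ne')
    have hsplit : (ε : ℂ) ^ a * (w t + ((ε ^ (b - a) : ℝ) : ℂ) * A t) = 0 := by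
      rw [mul_add, ← hteq]
      congr 1
      push_cast
      rw [← mul_assoc, ← pow_add]
      congr 2
      omega
    have h0 : w t + ((ε ^ (b - a) : ℝ) : ℂ) * A t = 0 :=
      (mul_eq_zero.mp hsplit).resolve_left hεa
    have hper : Function.Periodic (fun s => w s + ((ε ^ (b - a) : ℝ) : ℂ) * A s)
        (2 * Real.pi) := fun x => by simp only [hw_per x, hA_per x]
    obtain ⟨y, hy, hyeq⟩ := hper.exists_mem_Ico₀ Real.two_pi_pos t
    exact ⟨ε, y, hε0, hεlt, ⟨hy.1, hy.2.le⟩, by rw [← hyeq]; exact h0⟩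
  choose ε ts hε0 hεlt hts hEq using key
  have hba : 1 ≤ b - a := by omega
  have hδ0 : ∀ n, 0 < ε n ^ (b - a) := fun n => pow_pos (hε0 n) _
  have hδtendsto : Tendsto (fun n => ε n ^ (b - a)) atTop (𝓝 0) := by
    apply squeeze_zero (fun n => (hδ0 n).le) (fun n => ?_)
      tendsto_one_div_add_atTop_nhds_zero_nat
    have hε1 : ε n ≤ 1 := by
      have : 1 / ((n : ℝ) + 1) ≤ 1 := by
        rw [div_le_one (by positivity)]
        linarith [Nat.cast_nonneg (α := ℝ) n]
      linarith [hεlt n]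
    calc ε n ^ (b - a) ≤ ε n ^ 1 := pow_le_pow_of_le_one (hε0 n).le hε1 hba
      _ = ε n := pow_one _
      _ ≤ 1 / ((n : ℝ) + 1) := (hεlt n).le
  obtain ⟨t₀, _, φ, hφ, hstends⟩ :=
    (isCompact_Icc (a := (0 : ℝ)) (b := 2 * Real.pi)).tendsto_subseq hts
  set s : ℕ → ℝ := ts ∘ φ with hsdef
  set d : ℕ → ℝ := fun n => ε (φ n) ^ (b - a) with hddef
  have hd0 : ∀ n, 0 < d n := fun n => hδ0 _
  have hdtends : Tendsto d atTop (𝓝 0) := hδtendsto.comp hφ.tendsto_atTop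
  have hseq : ∀ n, w (s n) + ((d n : ℝ) : ℂ) * A (s n) = 0 := fun n => hEq (φ n)
  -- w t₀ = 0
  have hw_t₀ : w t₀ = 0 := by
    have l1 : Tendsto (fun n => w (s n)) atTop (𝓝 (w t₀)) :=
      ((hw_an t₀).continuousAt.tendsto).comp hstends
    have l2 : Tendsto (fun n => -(((d n : ℝ) : ℂ) * A (s n))) atTop (𝓝 (-(0 * A t₀))) := by
      refine Tendsto.neg (Tendsto.mul ?_ (((hA_an t₀).continuousAt.tendsto).comp hstends))
      exact (Complex.continuous_ofReal.tendsto 0).comp hdtends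
    have l2' : Tendsto (fun n => w (s n)) atTop (𝓝 (-(0 * A t₀))) := by
      refine l2.congr fun n => ?_
      linear_combination - hseq n
    simpa using tendsto_nhds_unique l1 l2'
  obtain ⟨hder, h2ne⟩ := horder t₀ hw_t₀
  obtain ⟨hAne, hcase⟩ := hzero t₀ hw_t₀
  obtain ⟨W, hW, hWne, hfac⟩ := get_factor hw_an hw0 hw_t₀ hder h2ne
  obtain ⟨hit2, hit3⟩ := factor_derivs hW hfac
  have hsne : ∀ n, s n ≠ t₀ := by
    intro n h
    have h' := hseq n
    rw [h, hw_t₀, zero_add, mul_eq_zero] at h'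
    rcases h' with h' | h'
    · exact (hd0 n).ne' (by exact_mod_cast h')
    · exact hAne h'
  have hWev : ∀ᶠ n in atTop, w (s n) = ((s n - t₀) ^ 2 : ℝ) • W (s n) ∧ W (s n) ≠ 0 := by
    have hne : ∀ᶠ t in 𝓝 t₀, W t ≠ 0 := hW.continuousAt.eventually_ne hWne
    exact hstends.eventually (hfac.and hne)
  set g : ℝ → ℂ := fun t => A t / W t with hgdef
  have hgcont : ContinuousAt g t₀ := ((hA_an t₀).continuousAt).div (hW.continuousAt) hWne
  have hgs : ∀ᶠ n in atTop, g (s n) = ((-(s n - t₀) ^ 2 / d n : ℝ) : ℂ) := by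
    filter_upwards [hWev] with n hn
    obtain ⟨hfacn, hWn⟩ := hn
    have h' := hseq n
    rw [hfacn, Complex.real_smul] at h'
    have hdne : ((d n : ℝ) : ℂ) ≠ 0 := by exact_mod_cast (hd0 n).ne'
    rw [hgdef]
    rw [div_eq_iff hWn]
    push_cast at h' ⊢
    rw [div_mul_eq_mul_div, eq_div_iff (by exact_mod_cast (hd0 n).ne' : ((d n : ℝ) : ℂ) ≠ 0)]
    linear_combination h'
  have hgtends : Tendsto (fun n => g (s n)) atTop (𝓝 (g t₀)) := hgcont.tendsto.comp hstends
  have him0 : (g t₀).im = 0 := by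
    have l1 : Tendsto (fun n => (g (s n)).im) atTop (𝓝 ((g t₀).im)) :=
      (Complex.continuous_im.tendsto _).comp hgtends
    have l2 : Tendsto (fun n => (g (s n)).im) atTop (𝓝 0) := by
      refine tendsto_const_nhds.congr' (hgs.mono fun n h => ?_)
      simp [h, ← Complex.ofReal_pow]
    exact tendsto_nhds_unique l1 l2
  have hre0 : (g t₀).re ≤ 0 := by
    have l1 : Tendsto (fun n => (g (s n)).re) atTop (𝓝 ((g t₀).re)) :=
      (Complex.continuous_re.tendsto _).comp hgtends
    refine le_of_tendsto l1 (hgs.mono fun n h => ?_)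
    rw [h, Complex.ofReal_re]
    apply div_nonpos_of_nonpos_of_nonneg
    · simp [sq_nonneg]
    · exact (hd0 n).le
  have hgne0 : g t₀ ≠ 0 := div_ne_zero hAne hWne
  have hgρ : g t₀ = (((g t₀).re : ℝ) : ℂ) := by
    rw [Complex.ext_iff]
    simp [him0]
  have hρneg : (g t₀).re < 0 := by
    rcases lt_or_eq_of_le hre0 with h | h
    · exact h
    · exfalso
      apply hgne0
      rw [hgρ, h, Complex.ofReal_zero]
  have hAW : A t₀ = g t₀ * W t₀ := by rw [hgdef]; field_simp
  set ρ : ℝ := (g t₀).re with hρdef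
  have hu : A t₀ = (ρ : ℂ) * W t₀ := by rw [hAW, hgρ]
  have hρne : ((ρ : ℝ) : ℂ) ≠ 0 := by exact_mod_cast hρneg.ne
  rcases hcase with hcase | hcase
  · apply hcase
    refine ⟨ρ * (2 * Complex.normSq (W t₀)), ?_, ?_⟩
    · nlinarith [Complex.normSq_pos.mpr hWne]
    · rw [hit2, hu, map_mul, map_ofNat]
      push_cast
      linear_combination (2 * ((ρ : ℝ) : ℂ)) * Complex.mul_conj (W t₀)
  · apply hcase
    have htarget : iteratedDeriv 3 w t₀ / (3 * iteratedDeriv 2 w t₀) = deriv W t₀ / W t₀ := by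
      rw [hit2, hit3, show (3 : ℂ) * (2 * W t₀) = 6 * W t₀ by ring,
        mul_div_mul_left _ _ (by norm_num : (6 : ℂ) ≠ 0)]
    rw [htarget]
    have hgan : AnalyticAt ℝ g t₀ := (hA_an t₀).div hW hWne
    have hfan : AnalyticAt ℝ (fun t => (g t).im) t₀ :=
      (Complex.imCLM.analyticAt (g t₀)).comp hgan
    rcases hfan.eventually_eq_zero_or_eventually_ne_zero with hev | hev
    · have hgd : HasDerivAt g ((deriv A t₀ * W t₀ - A t₀ * deriv W t₀) / W t₀ ^ 2) t₀ :=
        ((hA_an t₀).differentiableAt.hasDerivAt).div (hW.differentiableAt.hasDerivAt) hWne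
      have hfd : HasDerivAt (fun t => (g t).im)
          (((deriv A t₀ * W t₀ - A t₀ * deriv W t₀) / W t₀ ^ 2).im) t₀ :=
        Complex.imCLM.hasFDerivAt.comp_hasDerivAt t₀ hgd
      have hfder : deriv (fun t => (g t).im) t₀ = 0 := by
        have h' : (fun t => (g t).im) =ᶠ[𝓝 t₀] (fun _ => (0 : ℝ)) := hev
        rw [h'.deriv_eq, deriv_const]
      have him' : ((deriv A t₀ * W t₀ - A t₀ * deriv W t₀) / W t₀ ^ 2).im = 0 := by
        rw [← hfd.deriv]; exact hfder
      have hkey : deriv A t₀ / A t₀ - deriv W t₀ / W t₀ =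
          ((deriv A t₀ * W t₀ - A t₀ * deriv W t₀) / W t₀ ^ 2) * (((ρ⁻¹ : ℝ)) : ℂ) := by
        rw [hu, Complex.ofReal_inv]
        field_simp
        try ring
        try exact Or.inl trivial
      have him2 : (deriv A t₀ / A t₀ - deriv W t₀ / W t₀).im = 0 := by
        rw [hkey, Complex.im_mul_ofReal, him', zero_mul]
      rw [Complex.sub_im] at him2
      linarith
    · exfalso
      have hsne' : Tendsto s atTop (𝓝[≠] t₀) :=
        tendsto_nhdsWithin_iff.mpr ⟨hstends, Eventually.of_forall fun n => hsne n⟩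
      have h1 := hsne'.eventually hev
      have h2 : ∀ᶠ n in atTop, (g (s n)).im = 0 := hgs.mono fun n h => by
        rw [h, Complex.ofReal_im]
      obtain ⟨n, hn1, hn2⟩ := (h1.and h2).exists
      exact hn1 hn2
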